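/- Assume AD (the Axiom of Determinacy) and countable choice for reals. The Martin (Turing-cone) filter μ_D on the set D of Turing degrees — consisting of all sets of degrees containing a cone {Y : X ≤_T Y} — is a countably complete ultrafilter. -/

import Mathlib

/-- Relative partial recursiveness in an oracle `g` (Kleene schemata). -/
inductive RecursiveInOld (g : ℕ →. ℕ) : (ℕ →. ℕ) → Prop
  | zero : RecursiveInOld g (pure 0)
  | succ : RecursiveInOld g ↑Nat.succ
  | left : RecursiveInOld g ↑fun n : ℕ => n.unpair.1
  | right : RecursiveInOld g ↑fun n : ℕ => n.unpair.2
  | oracle : RecursiveInOld g g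
  | pair {f h : ℕ →. ℕ} : RecursiveInOld g f → RecursiveInOld g h →
      RecursiveInOld g fun n => Nat.pair <$> f n <*> h n
  | comp {f h : ℕ →. ℕ} : RecursiveInOld g f → RecursiveInOld g h →
      RecursiveInOld g fun n => h n >>= f
  | prec {f h : ℕ →. ℕ} : RecursiveInOld g f → RecursiveInOld g h →
      RecursiveInOld g (Nat.unpaired fun a n =>
        n.rec (f a) fun y IH => do let i ← IH; h (Nat.pair a (Nat.pair y i)))
  | rfind {f : ℕ →. ℕ} : RecursiveInOld g f →
      RecursiveInOld g fun a => Nat.rfind fun n => (fun m => m = 0) <$> f (Nat.pair a n)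

/-- Turing reducibility on reals (elements of `ℕ → ℕ`). -/
def TuringLE (x y : ℕ → ℕ) : Prop := RecursiveInOld ↑y ↑x

/-- Turing equivalence. -/
def TuringEquiv (x y : ℕ → ℕ) : Prop := TuringLE x y ∧ TuringLE y x

/-- The Turing degrees: reals modulo Turing equivalence. -/
def TDegree : Type := Quot TuringEquiv

/-- The ordering of Turing degrees. -/
def degLE (X Y : TDegree) : Prop :=
  ∃ x y : ℕ → ℕ, Quot.mk TuringEquiv x = X ∧ Quot.mk TuringEquiv y = Y ∧ TuringLE x y

/-- The cone of degrees above `X`. -/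
def coneAbove (X : TDegree) : Set TDegree := {Y | degLE X Y}

/-- The Martin (cone) filter on the Turing degrees. -/
def martinFilter : Set (Set TDegree) := {K | ∃ X : TDegree, coneAbove X ⊆ K}

/-- The position after `n` moves when player I uses `σ` and player II uses `τ`. -/
def gameRun (σ τ : List ℕ → ℕ) : ℕ → List ℕ
  | 0 => []
  | n + 1 => gameRun σ τ n ++
      [if n % 2 = 0 then σ (gameRun σ τ n) else τ (gameRun σ τ n)]

/-- The infinite play produced when player I uses `σ` and player II uses `τ`. -/
def gamePlay (σ τ : List ℕ → ℕ) (n : ℕ) : ℕ :=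
  if n % 2 = 0 then σ (gameRun σ τ n) else τ (gameRun σ τ n)

/-- The Axiom of Determinacy: every game on `ω` is determined. -/
def AD : Prop := ∀ A : Set (ℕ → ℕ),
  (∃ σ, ∀ τ, gamePlay σ τ ∈ A) ∨ (∃ τ, ∀ σ, gamePlay σ τ ∉ A)

namespace RecursiveInOld

theorem of_eq {g f f' : ℕ →. ℕ} (hf : RecursiveInOld g f) (H : ∀ n, f n = f' n) :
    RecursiveInOld g f' := (funext H : f = f') ▸ hf

theorem of_partrec {g f : ℕ →. ℕ} (hf : Nat.Partrec f) : RecursiveInOld g f := by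
  induction hf with
  | zero => exact .zero
  | succ => exact .succ
  | left => exact .left
  | right => exact .right
  | pair _ _ ihf ihh => exact .pair ihf ihh
  | comp _ _ ihf ihh => exact .comp ihf ihh
  | prec _ _ ihf ihh => exact .prec ihf ihh
  | rfind _ ihf => exact .rfind ihf

theorem of_primrec {g : ℕ →. ℕ} {f : ℕ → ℕ} (hf : Primrec f) : RecursiveInOld g ↑f :=
  of_partrec (Nat.Partrec.of_primrec (Primrec.nat_iff.mp hf))

theorem totalComp {g : ℕ →. ℕ} {f h : ℕ → ℕ} (hf : RecursiveInOld g ↑f)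
    (hh : RecursiveInOld g ↑h) : RecursiveInOld g ↑(fun n => f (h n)) :=
  (hf.comp hh).of_eq fun n => by exact Part.bind_some _ _

theorem totalPair {g : ℕ →. ℕ} {f h : ℕ → ℕ} (hf : RecursiveInOld g ↑f)
    (hh : RecursiveInOld g ↑h) :
    RecursiveInOld g ↑(fun n => Nat.pair (f n) (h n)) :=
  (hf.pair hh).of_eq fun n => by simp [PFun.coe_val, Seq.seq]

theorem totalPrec {g : ℕ →. ℕ} {f h : ℕ → ℕ} (hf : RecursiveInOld g ↑f)
    (hh : RecursiveInOld g ↑h) :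
    RecursiveInOld g ↑(Nat.unpaired fun a n =>
      (n.rec (f a) fun y IH => h (Nat.pair a (Nat.pair y IH)) : ℕ)) :=
  (hf.prec hh).of_eq fun n => by
    simp only [Nat.unpaired, PFun.coe_val]
    induction n.unpair.2 with
    | zero => simp
    | succ m ih => simp only [Nat.rec_add_one]; rw [ih]; simp

theorem trans {f g h : ℕ →. ℕ} (hf : RecursiveInOld g f) (hg : RecursiveInOld h g) :
    RecursiveInOld h f := by
  induction hf with
  | zero => exact .zero
  | succ => exact .succ
  | left => exact .left
  | right => exact .right
  | oracle => exact hg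
  | pair _ _ ihf ihh => exact .pair ihf ihh
  | comp _ _ ihf ihh => exact .comp ihf ihh
  | prec _ _ ihf ihh => exact .prec ihf ihh
  | rfind _ ihf => exact .rfind ihf

end RecursiveInOld

theorem totalComp₂ {g : ℕ →. ℕ} {F : ℕ → ℕ → ℕ} (hF : Primrec₂ F) {f h : ℕ → ℕ}
    (hf : RecursiveInOld g ↑f) (hh : RecursiveInOld g ↑h) :
    RecursiveInOld g ↑(fun n => F (f n) (h n)) := by
  have hU : Primrec fun m : ℕ => F m.unpair.1 m.unpair.2 :=
    hF.comp (Primrec.fst.comp Primrec.unpair) (Primrec.snd.comp Primrec.unpair)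
  exact ((RecursiveInOld.of_primrec hU).totalComp (RecursiveInOld.totalPair hf hh)).of_eq
    fun n => by simp

theorem recIn_ite {g : ℕ →. ℕ} {f h : ℕ → ℕ} (hf : RecursiveInOld g ↑f)
    (hh : RecursiveInOld g ↑h) {c : ℕ → ℕ} (hc : Primrec c) :
    RecursiveInOld g ↑(fun n => if c n = 0 then f n else h n) := by
  have hF : Primrec₂ fun n m : ℕ => if c n = 0 then m.unpair.1 else m.unpair.2 := by
    refine Primrec.ite ?_ ?_ ?_
    · exact Primrec.eq.comp (hc.comp Primrec.fst) (Primrec.const 0)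
    · exact (Primrec.fst.comp Primrec.unpair).comp Primrec.snd
    · exact (Primrec.snd.comp Primrec.unpair).comp Primrec.snd
  have := totalComp₂ hF (RecursiveInOld.of_primrec Primrec.id) (RecursiveInOld.totalPair hf hh)
  exact this.of_eq fun n => by by_cases hcn : c n = 0 <;> simp [hcn]


/-- The real coding a strategy. -/
def sreal (s : List ℕ → ℕ) : ℕ → ℕ :=
  fun n => s ((Encodable.decode (α := List ℕ) n).getD [])

theorem sreal_encode (s : List ℕ → ℕ) (l : List ℕ) :
    sreal s (Encodable.encode l) = s l := by simp [sreal]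

/-- Encoded run. -/
def eRun (σ τ : List ℕ → ℕ) (n : ℕ) : ℕ := Encodable.encode (gameRun σ τ n)

/-- appending encoded -/
def app2 (e v : ℕ) : ℕ :=
  Encodable.encode (((Encodable.decode (α := List ℕ) e).getD []) ++ [v])

theorem app2_primrec : Primrec₂ app2 :=
  Primrec.encode.comp
    (Primrec.list_append.comp
      (Primrec.option_getD.comp (Primrec.decode.comp Primrec.fst) (Primrec.const []))
      ((Primrec.list_cons.comp Primrec.snd (Primrec.const []))))

theorem eRun_zero (σ τ : List ℕ → ℕ) : eRun σ τ 0 = Encodable.encode ([] : List ℕ) := rfl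

theorem eRun_succ (σ τ : List ℕ → ℕ) (n : ℕ) :
    eRun σ τ (n + 1) =
      app2 (eRun σ τ n)
        (if n % 2 = 0 then sreal σ (eRun σ τ n) else sreal τ (eRun σ τ n)) := by
  simp [eRun, app2, gameRun, sreal, Encodable.encodek]

theorem eRun_recIn {g : ℕ →. ℕ} {σ τ : List ℕ → ℕ}
    (hσ : RecursiveInOld g ↑(sreal σ)) (hτ : RecursiveInOld g ↑(sreal τ)) :
    RecursiveInOld g ↑(eRun σ τ) := by
  -- i m = m.unpair.2.unpair.2 (previous value), y m = m.unpair.2.unpair.1 (step index)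
  have hi : Primrec fun m : ℕ => m.unpair.2.unpair.2 :=
    (Primrec.snd.comp Primrec.unpair).comp (Primrec.snd.comp Primrec.unpair)
  have hyp : Primrec fun m : ℕ => m.unpair.2.unpair.1 :=
    (Primrec.fst.comp Primrec.unpair).comp (Primrec.snd.comp Primrec.unpair)
  have hu1 : RecursiveInOld g ↑(fun m : ℕ => app2 m.unpair.2.unpair.2
      (sreal σ m.unpair.2.unpair.2)) :=
    totalComp₂ app2_primrec (RecursiveInOld.of_primrec hi)
      (hσ.totalComp (RecursiveInOld.of_primrec hi))
  have hu2 : RecursiveInOld g ↑(fun m : ℕ => app2 m.unpair.2.unpair.2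
      (sreal τ m.unpair.2.unpair.2)) :=
    totalComp₂ app2_primrec (RecursiveInOld.of_primrec hi)
      (hτ.totalComp (RecursiveInOld.of_primrec hi))
  have hstep : RecursiveInOld g ↑(fun m : ℕ => if m.unpair.2.unpair.1 % 2 = 0 then
      app2 m.unpair.2.unpair.2 (sreal σ m.unpair.2.unpair.2)
      else app2 m.unpair.2.unpair.2 (sreal τ m.unpair.2.unpair.2)) :=
    recIn_ite hu1 hu2 (Primrec.nat_mod.comp hyp (Primrec.const 2))
  have hP := RecursiveInOld.totalPrec (g := g)
    (f := fun _ => Encodable.encode ([] : List ℕ)) (RecursiveInOld.of_primrec (Primrec.const _))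
    hstep
  have key : ∀ n : ℕ, (Nat.unpaired fun a n =>
      (n.rec (Encodable.encode ([] : List ℕ)) fun y IH =>
        (fun m : ℕ => if m.unpair.2.unpair.1 % 2 = 0 then
          app2 m.unpair.2.unpair.2 (sreal σ m.unpair.2.unpair.2)
          else app2 m.unpair.2.unpair.2 (sreal τ m.unpair.2.unpair.2))
          (Nat.pair a (Nat.pair y IH)) : ℕ)) (Nat.pair 0 n) = eRun σ τ n := by
    intro n
    induction n with
    | zero => simp [Nat.unpaired, eRun_zero]
    | succ m ih =>
      simp only [Nat.unpaired, Nat.unpair_pair] at ih ⊢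
      rw [ih, eRun_succ]
      by_cases h : m % 2 = 0 <;> simp [h]
  have := hP.totalComp (g := g)
    (RecursiveInOld.of_primrec (Primrec₂.natPair.comp (Primrec.const 0) Primrec.id))
  exact this.of_eq fun n => congrArg Part.some (key n)

theorem gamePlay_recIn {g : ℕ →. ℕ} {σ τ : List ℕ → ℕ}
    (hσ : RecursiveInOld g ↑(sreal σ)) (hτ : RecursiveInOld g ↑(sreal τ)) :
    RecursiveInOld g ↑(gamePlay σ τ) := by
  have he := eRun_recIn hσ hτ
  have h1 : RecursiveInOld g ↑(fun n : ℕ => sreal σ (eRun σ τ n)) := hσ.totalComp he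
  have h2 : RecursiveInOld g ↑(fun n : ℕ => sreal τ (eRun σ τ n)) := hτ.totalComp he
  have := recIn_ite h1 h2 (Primrec.nat_mod.comp Primrec.id (Primrec.const 2))
  exact this.of_eq fun n => by
    simp only [PFun.coe_val, id_eq]
    by_cases h : n % 2 = 0 <;> simp [h, gamePlay, sreal, eRun, Encodable.encodek]

/-- The strategy that copies the real `y`. -/
def copyStrat (y : ℕ → ℕ) : List ℕ → ℕ := fun l => y (l.length / 2)

theorem sreal_copyStrat_recIn (y : ℕ → ℕ) : RecursiveInOld ↑y ↑(sreal (copyStrat y)) := by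
  have hp : Primrec fun n : ℕ => ((Encodable.decode (α := List ℕ) n).getD []).length / 2 :=
    Primrec.nat_div.comp
      (Primrec.list_length.comp (Primrec.option_getD.comp Primrec.decode (Primrec.const [])))
      (Primrec.const 2)
  have := RecursiveInOld.totalComp (g := ↑y) (f := y) .oracle (RecursiveInOld.of_primrec hp)
  exact this.of_eq fun n => rfl

theorem gameRun_length (σ τ : List ℕ → ℕ) (n : ℕ) : (gameRun σ τ n).length = n := by
  induction n with
  | zero => rfl
  | succ m ih => simp [gameRun, ih]

theorem gamePlay_copy_II (σ : List ℕ → ℕ) (y : ℕ → ℕ) (k : ℕ) :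
    gamePlay σ (copyStrat y) (2 * k + 1) = y k := by
  rw [gamePlay, if_neg (by omega : ¬(2 * k + 1) % 2 = 0)]
  simp [copyStrat, gameRun_length]
  congr 1
  omega

theorem gamePlay_copy_I (τ : List ℕ → ℕ) (y : ℕ → ℕ) (k : ℕ) :
    gamePlay (copyStrat y) τ (2 * k) = y k := by
  rw [gamePlay, if_pos (by omega : (2 * k) % 2 = 0)]
  simp [copyStrat, gameRun_length]

theorem turingEquiv_copy_II {σ : List ℕ → ℕ} {y : ℕ → ℕ}
    (hσ : RecursiveInOld ↑y ↑(sreal σ)) :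
    RecursiveInOld ↑y ↑(gamePlay σ (copyStrat y)) ∧
    RecursiveInOld ↑(gamePlay σ (copyStrat y)) ↑y := by
  constructor
  · exact gamePlay_recIn hσ (sreal_copyStrat_recIn y)
  · have := RecursiveInOld.totalComp (g := ↑(gamePlay σ (copyStrat y)))
      (f := gamePlay σ (copyStrat y)) (h := fun k => 2 * k + 1) .oracle
      (RecursiveInOld.of_primrec
        (Primrec.succ.comp (Primrec.nat_mul.comp (Primrec.const 2) Primrec.id)))
    exact this.of_eq fun k => congrArg Part.some (gamePlay_copy_II σ y k)

theorem turingEquiv_copy_I {τ : List ℕ → ℕ} {y : ℕ → ℕ}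
    (hτ : RecursiveInOld ↑y ↑(sreal τ)) :
    RecursiveInOld ↑y ↑(gamePlay (copyStrat y) τ) ∧
    RecursiveInOld ↑(gamePlay (copyStrat y) τ) ↑y := by
  constructor
  · exact gamePlay_recIn (sreal_copyStrat_recIn y) hτ
  · have := RecursiveInOld.totalComp (g := ↑(gamePlay (copyStrat y) τ))
      (f := gamePlay (copyStrat y) τ) (h := fun k => 2 * k) .oracle
      (RecursiveInOld.of_primrec (Primrec.nat_mul.comp (Primrec.const 2) Primrec.id))
    exact this.of_eq fun k => congrArg Part.some (gamePlay_copy_I τ y k)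

theorem turingEquiv_equivalence : Equivalence TuringEquiv :=
  ⟨fun _ => ⟨.oracle, .oracle⟩, fun h => ⟨h.2, h.1⟩,
   fun h1 h2 => ⟨RecursiveInOld.trans h1.1 h2.1, RecursiveInOld.trans h2.2 h1.2⟩⟩

theorem quot_mk_eq_iff {x y : ℕ → ℕ} :
    Quot.mk TuringEquiv x = Quot.mk TuringEquiv y ↔ TuringEquiv x y :=
  ⟨fun h => turingEquiv_equivalence.eqvGen_iff.mp (Quot.eqvGen_exact h), Quot.sound⟩


/-- Martin: assuming AD and countable choice for reals, the
Martin cone filter on the Turing degrees is a countably complete ultrafilter. -/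
theorem martin_measure_countably_complete_ultrafilter
    (hAD : AD)
    (hACωℝ : ∀ A : ℕ → Set (ℕ → ℕ), (∀ n, (A n).Nonempty) →
      ∃ f : ℕ → ℕ → ℕ, ∀ n, f n ∈ A n) :
    (∀ K : Set TDegree, K ∈ martinFilter ∨ Kᶜ ∈ martinFilter) ∧
    (∅ : Set TDegree) ∉ martinFilter ∧
    (∀ K : ℕ → Set TDegree, (∀ n, K n ∈ martinFilter) →
      (⋂ n, K n) ∈ martinFilter) := by
  refine ⟨?_, ?_, ?_⟩
  · intro K
    rcases hAD {x | Quot.mk TuringEquiv x ∈ K} with ⟨σ, hwin⟩ | ⟨τ, hwin⟩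
    · left
      refine ⟨Quot.mk TuringEquiv (sreal σ), ?_⟩
      rintro Y ⟨x, y, hx, hy, hxy⟩
      have hσy : RecursiveInOld ↑y ↑(sreal σ) :=
        RecursiveInOld.trans (quot_mk_eq_iff.mp hx).2 hxy
      have hcopy := turingEquiv_copy_II hσy
      have heq : Quot.mk TuringEquiv (gamePlay σ (copyStrat y)) = Quot.mk TuringEquiv y :=
        Quot.sound ⟨hcopy.1, hcopy.2⟩
      have hp : Quot.mk TuringEquiv (gamePlay σ (copyStrat y)) ∈ K := hwin (copyStrat y)
      rw [← hy, ← heq]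
      exact hp
    · right
      refine ⟨Quot.mk TuringEquiv (sreal τ), ?_⟩
      rintro Y ⟨x, y, hx, hy, hxy⟩
      have hτy : RecursiveInOld ↑y ↑(sreal τ) :=
        RecursiveInOld.trans (quot_mk_eq_iff.mp hx).2 hxy
      have hcopy := turingEquiv_copy_I hτy
      have heq : Quot.mk TuringEquiv (gamePlay (copyStrat y) τ) = Quot.mk TuringEquiv y :=
        Quot.sound ⟨hcopy.1, hcopy.2⟩
      have hp : Quot.mk TuringEquiv (gamePlay (copyStrat y) τ) ∉ K := hwin (copyStrat y)
      rw [← hy, ← heq]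
      exact hp
  · rintro ⟨X, hX⟩
    obtain ⟨x, hx⟩ := Quot.exists_rep X
    exact hX ⟨x, x, hx, hx, .oracle⟩
  · intro K hK
    have hA : ∀ n, {x : ℕ → ℕ | coneAbove (Quot.mk TuringEquiv x) ⊆ K n}.Nonempty := by
      intro n
      obtain ⟨X, hX⟩ := hK n
      obtain ⟨x, hx⟩ := Quot.exists_rep X
      exact ⟨x, by simp only [Set.mem_setOf_eq, hx]; exact hX⟩
    obtain ⟨f, hf⟩ := hACωℝ _ hA
    refine ⟨Quot.mk TuringEquiv (fun m : ℕ => f m.unpair.1 m.unpair.2), ?_⟩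
    rintro Y ⟨x, y, hx, hy, hxy⟩
    have hJy : RecursiveInOld ↑y ↑(fun m : ℕ => f m.unpair.1 m.unpair.2) :=
      RecursiveInOld.trans (quot_mk_eq_iff.mp hx).2 hxy
    refine Set.mem_iInter.mpr fun n => ?_
    apply hf n
    refine ⟨f n, y, rfl, hy, ?_⟩
    have h1 : RecursiveInOld ↑(fun m : ℕ => f m.unpair.1 m.unpair.2) ↑(f n) := by
      have := RecursiveInOld.totalComp (g := ↑(fun m : ℕ => f m.unpair.1 m.unpair.2))
        (f := fun m : ℕ => f m.unpair.1 m.unpair.2) (h := fun k => Nat.pair n k) .oracle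
        (RecursiveInOld.of_primrec (Primrec₂.natPair.comp (Primrec.const n) Primrec.id))
      exact this.of_eq fun k => by simp
    exact RecursiveInOld.trans h1 hJy
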